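/- Let p and q be probability density functions on a measurable space (nonnegative measurable functions integrating to 1 with respect to a σ-finite measure μ). Define C(q) = ∫ p(x) log(p(x)/(p(x)+q(x))) dμ + ∫ q(x) log(q(x)/(p(x)+q(x))) dμ (with the convention 0·log 0 = 0). Then C(q) ≥ -2 log 2, with equality if p = q μ-almost everywhere. -/

import Mathlib

open Real MeasureTheory

lemma stmt_2_aux (a b : ℝ) (ha : 0 ≤ a) (hb : 0 ≤ b) :
    -((a + b) * Real.log 2) ≤ a * Real.log (a / (a + b)) + b * Real.log (b / (a + b)) := by
  rcases ha.eq_or_lt with ha0 | ha0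
  · rcases hb.eq_or_lt with hb0 | hb0
    · simp [← ha0, ← hb0]
    · rw [← ha0]
      simp only [zero_add, zero_mul, div_self hb0.ne', Real.log_one, mul_zero, add_zero]
      have := Real.log_pos (by norm_num : (1:ℝ) < 2)
      nlinarith
  · rcases hb.eq_or_lt with hb0 | hb0
    · rw [← hb0]
      simp only [add_zero, zero_mul, div_self ha0.ne', Real.log_one, mul_zero, zero_add]
      have := Real.log_pos (by norm_num : (1:ℝ) < 2)
      nlinarith
    · have hs : 0 < a + b := by linarith
      have key := Real.convexOn_mul_log.2 (Set.mem_Ici.2 ha) (Set.mem_Ici.2 hb)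
        (by norm_num : (0:ℝ) ≤ 1/2) (by norm_num : (0:ℝ) ≤ 1/2) (by norm_num)
      simp only [smul_eq_mul] at key
      have h1 : Real.log (a / (a + b)) = Real.log a - Real.log (a + b) :=
        Real.log_div ha0.ne' hs.ne'
      have h2 : Real.log (b / (a + b)) = Real.log b - Real.log (a + b) :=
        Real.log_div hb0.ne' hs.ne'
      have h3 : Real.log (1/2 * a + 1/2 * b) = Real.log (a + b) - Real.log 2 := by
        rw [show 1/2 * a + 1/2 * b = (a + b) / 2 by ring, Real.log_div hs.ne' (by norm_num)]
      rw [h3] at key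
      rw [h1, h2]
      nlinarith [key]

/-- For probability densities `p`, `q` w.r.t. a σ-finite measure `μ`,
`C(q) = ∫ p log (p/(p+q)) + ∫ q log (q/(p+q)) ≥ -2 log 2`,
with equality if `p = q` μ-a.e.  (In Lean, `Real.log 0 = 0` and
`0 * x = 0`, so the convention `0 · log 0 = 0` holds automatically.) -/
theorem stmt_2 {α : Type*} [MeasurableSpace α] (μ : Measure α) [SigmaFinite μ]
    (p q : α → ℝ) (hpm : Measurable p) (hqm : Measurable q)
    (hp0 : ∀ x, 0 ≤ p x) (hq0 : ∀ x, 0 ≤ q x)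
    (hp1 : ∫ x, p x ∂μ = 1) (hq1 : ∫ x, q x ∂μ = 1)
    (hint1 : Integrable (fun x => p x * Real.log (p x / (p x + q x))) μ)
    (hint2 : Integrable (fun x => q x * Real.log (q x / (p x + q x))) μ) :
    -2 * Real.log 2 ≤
      (∫ x, p x * Real.log (p x / (p x + q x)) ∂μ) +
        (∫ x, q x * Real.log (q x / (p x + q x)) ∂μ) ∧
    (p =ᵐ[μ] q →
      (∫ x, p x * Real.log (p x / (p x + q x)) ∂μ) +
        (∫ x, q x * Real.log (q x / (p x + q x)) ∂μ) = -2 * Real.log 2) := by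
  have hpint : Integrable p μ := by
    by_contra h
    rw [integral_undef h] at hp1
    exact one_ne_zero hp1.symm
  have hqint : Integrable q μ := by
    by_contra h
    rw [integral_undef h] at hq1
    exact one_ne_zero hq1.symm
  constructor
  · have hf : ∀ x, 0 ≤ p x * Real.log (p x / (p x + q x)) +
        q x * Real.log (q x / (p x + q x)) + (p x + q x) * Real.log 2 := by
      intro x
      have := stmt_2_aux (p x) (q x) (hp0 x) (hq0 x)
      linarith
    have hint3 : Integrable (fun x => (p x + q x) * Real.log 2) μ :=
      (hpint.add hqint).mul_const _
    have hint12 : Integrable (fun x => p x * Real.log (p x / (p x + q x)) +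
        q x * Real.log (q x / (p x + q x))) μ := hint1.add hint2
    have h := integral_nonneg (μ := μ) (f := fun x => p x * Real.log (p x / (p x + q x)) +
        q x * Real.log (q x / (p x + q x)) + (p x + q x) * Real.log 2) hf
    rw [integral_add hint12 hint3, integral_add hint1 hint2,
      integral_mul_const, integral_add hpint hqint, hp1, hq1] at h
    linarith
  · intro hpq
    have h1 : (fun x => p x * Real.log (p x / (p x + q x)))
        =ᵐ[μ] fun x => -Real.log 2 * p x := by
      filter_upwards [hpq] with x hx
      rw [hx]
      rcases eq_or_ne (q x) 0 with h0 | h0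
      · simp [h0]
      · rw [show q x / (q x + q x) = 2⁻¹ by rw [← two_mul, mul_comm, ← div_div, div_self h0, one_div], Real.log_inv]
        ring
    have h2 : (fun x => q x * Real.log (q x / (p x + q x)))
        =ᵐ[μ] fun x => -Real.log 2 * q x := by
      filter_upwards [hpq] with x hx
      rw [hx]
      rcases eq_or_ne (q x) 0 with h0 | h0
      · simp [h0]
      · rw [show q x / (q x + q x) = 2⁻¹ by rw [← two_mul, mul_comm, ← div_div, div_self h0, one_div], Real.log_inv]
        ring
    rw [integral_congr_ae h1, integral_congr_ae h2, integral_const_mul, integral_const_mul,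
      hp1, hq1]
    ring
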